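/- Let c and n be positive integers and y = (c,c,…,c) ∈ ℕ^n the constant list. Then the number of nondecreasing invariant parking assortments for y equals the n-th Catalan number: |PA^{inv,↑}_n(y)| = C_n = (1/(n+1))·binom(2n, n). -/

import Mathlib

open Classical in
/-- One car attempts to park on a one-way street with spots `1, …, m`: given the set
`occ` of occupied spots, the car with preference `p` and length `l` parks in spots
`j, j+1, …, j+l-1` for the least `j ≥ p` such that these spots all exist (are `≤ m`)
and are unoccupied; returns the new set of occupied spots, or `none` if parking fails. -/
noncomputable def parkOne (m : ℕ) (occ : Finset ℕ) (p l : ℕ) : Option (Finset ℕ) :=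
  if h : ∃ j, p ≤ j ∧ j + l ≤ m + 1 ∧ ∀ k ∈ Finset.Ico j (j + l), k ∉ occ then
    some (occ ∪ Finset.Ico (Nat.find h) (Nat.find h + l))
  else none

/-- Run the parking-assortment process for the cars `(preference, length)` in order. -/
noncomputable def parkList (m : ℕ) : List (ℕ × ℕ) → Finset ℕ → Option (Finset ℕ)
  | [], occ => some occ
  | c :: rest, occ => (parkOne m occ c.1 c.2).bind (parkList m rest)

/-- `x` is a parking assortment for the list of car lengths `y`. -/
def IsPA (y x : List ℕ) : Prop :=
  x.length = y.length ∧ (∀ a ∈ x, 1 ≤ a ∧ a ≤ y.sum) ∧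
    (parkList y.sum (x.zip y) ∅).isSome

/-- `PA y` is the set of parking assortments for `y`. -/
def PA (y : List ℕ) : Set (List ℕ) := {x | IsPA y x}

/-- `PAinv y` is the set of (permutation-)invariant parking assortments for `y`:
those preference lists all of whose rearrangements are parking assortments for `y`. -/
def PAinv (y : List ℕ) : Set (List ℕ) := {x | ∀ x', x'.Perm x → IsPA y x'}

/-- `y` is minimally invariant if the all-ones list is the only invariant
parking assortment for `y`. -/
def MinInv (y : List ℕ) : Prop := PAinv y = {List.replicate y.length 1}

open Finset List

lemma parkOne_some_elim {m : ℕ} {occ : Finset ℕ} {p l : ℕ} {occ' : Finset ℕ}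
    (h : parkOne m occ p l = some occ') :
    ∃ j, p ≤ j ∧ j + l ≤ m + 1 ∧ (∀ k ∈ Finset.Ico j (j + l), k ∉ occ) ∧
      occ' = occ ∪ Finset.Ico j (j + l) ∧
      (∀ j', p ≤ j' → j' + l ≤ m + 1 → (∀ k ∈ Finset.Ico j' (j' + l), k ∉ occ) → j ≤ j') := by
  unfold parkOne at h
  split_ifs at h with hex
  · refine ⟨Nat.find hex, (Nat.find_spec hex).1, (Nat.find_spec hex).2.1,
      (Nat.find_spec hex).2.2, (Option.some.injEq _ _ ▸ h).symm, ?_⟩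
    exact fun j' h1 h2 h3 => Nat.find_le ⟨h1, h2, h3⟩

lemma parkOne_eq_some {m : ℕ} {occ : Finset ℕ} {p l j : ℕ}
    (hp : p ≤ j) (hm : j + l ≤ m + 1) (hfree : ∀ k ∈ Finset.Ico j (j + l), k ∉ occ)
    (hmin : ∀ j', p ≤ j' → j' + l ≤ m + 1 → (∀ k ∈ Finset.Ico j' (j' + l), k ∉ occ) → j ≤ j') :
    parkOne m occ p l = some (occ ∪ Finset.Ico j (j + l)) := by
  have hex : ∃ j, p ≤ j ∧ j + l ≤ m + 1 ∧ ∀ k ∈ Finset.Ico j (j + l), k ∉ occ :=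
    ⟨j, hp, hm, hfree⟩
  have hj : Nat.find hex = j := by
    have h1 := Nat.find_spec hex
    have h2 : Nat.find hex ≤ j := Nat.find_le ⟨hp, hm, hfree⟩
    exact le_antisymm h2 (hmin _ h1.1 h1.2.1 h1.2.2)
  unfold parkOne
  rw [dif_pos hex, hj]

lemma parkOne_none {m : ℕ} {occ : Finset ℕ} {p l : ℕ}
    (h : ¬ ∃ j, p ≤ j ∧ j + l ≤ m + 1 ∧ ∀ k ∈ Finset.Ico j (j + l), k ∉ occ) :
    parkOne m occ p l = none := by
  unfold parkOne; rw [dif_neg h]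

lemma parkList_append (m : ℕ) (L₁ L₂ : List (ℕ × ℕ)) (occ : Finset ℕ) :
    parkList m (L₁ ++ L₂) occ = (parkList m L₁ occ).bind (parkList m L₂) := by
  induction L₁ generalizing occ with
  | nil => rfl
  | cons a t ih =>
    show (parkOne m occ a.1 a.2).bind _ = _
    cases hp : parkOne m occ a.1 a.2 with
    | none => simp [parkList, hp]
    | some o => simp [parkList, hp, ih]

lemma parkList_some_elim {m : ℕ} {L : List (ℕ × ℕ)} {occ occ' : Finset ℕ}
    (h : parkList m L occ = some occ') :
    occ ⊆ occ' ∧ occ'.card = occ.card + (L.map Prod.snd).sum ∧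
      (∀ t, (∀ pc ∈ L, t ≤ pc.1) → occ' ⊆ occ ∪ Finset.Icc t m) := by
  induction L generalizing occ with
  | nil =>
    simp only [parkList, Option.some.injEq] at h
    subst h
    exact ⟨le_refl _, by simp, fun t _ => by simp⟩
  | cons a tl ih =>
    simp only [parkList] at h
    cases hp : parkOne m occ a.1 a.2 with
    | none => rw [hp] at h; simp at h
    | some o =>
      rw [hp] at h
      rw [Option.bind_some] at h
      obtain ⟨j, hpj, hjm, hfree, rfl, -⟩ := parkOne_some_elim hp
      obtain ⟨hsub, hcard, hicc⟩ := ih h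
      have hdisj : Disjoint occ (Finset.Ico j (j + a.2)) := by
        rw [Finset.disjoint_right]; exact fun k hk => hfree k hk
      refine ⟨fun k hk => hsub (Finset.mem_union_left _ hk), ?_, ?_⟩
      · rw [hcard, Finset.card_union_of_disjoint hdisj, Nat.card_Ico]
        simp only [List.map_cons, List.sum_cons, Nat.add_sub_cancel_left]
        omega
      · intro t ht
        intro k hk
        have := hicc t (fun pc hpc => ht pc (List.mem_cons_of_mem _ hpc)) hk
        rcases Finset.mem_union.mp this with h1 | h1
        · rcases Finset.mem_union.mp h1 with h2 | h2
          · exact Finset.mem_union_left _ h2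
          · have hk1 := (Finset.mem_Ico.mp h2).1
            have hk2 := (Finset.mem_Ico.mp h2).2
            have hta : t ≤ a.1 := ht a (List.mem_cons_self)
            exact Finset.mem_union_right _ (Finset.mem_Icc.mpr ⟨le_trans hta (le_trans hpj hk1), by omega⟩)
        · exact Finset.mem_union_right _ h1

lemma zip_replicate_eq_map {x : List ℕ} {n c : ℕ} (h : x.length = n) :
    x.zip (List.replicate n c) = x.map (fun a => (a, c)) := by
  induction x generalizing n with
  | nil => simp
  | cons a t ih =>
    cases n with
    | zero => simp at h
    | succ n =>
      simp only [List.replicate_succ, List.zip_cons_cons, List.map_cons]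
      rw [ih (by simpa using h)]

lemma parkList_mod {m c e : ℕ} (hc : 0 < c) {L : List (ℕ × ℕ)} (hL : ∀ pc ∈ L, pc.2 = c)
    {occ occ' : Finset ℕ} (h : parkList m L occ = some occ')
    (hocc : Finset.Ico e (e + c) ⊆ occ) :
    (occ' ∩ Finset.range e).card ≡ (occ ∩ Finset.range e).card [MOD c] := by
  induction L generalizing occ with
  | nil =>
    simp only [parkList, Option.some.injEq] at h
    subst h; rfl
  | cons a tl ih =>
    simp only [parkList] at h
    cases hp : parkOne m occ a.1 a.2 with
    | none => rw [hp] at h; simp at h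
    | some o =>
      rw [hp, Option.bind_some] at h
      obtain ⟨j, hpj, hjm, hfree, rfl, -⟩ := parkOne_some_elim hp
      have hac : a.2 = c := hL a (List.mem_cons_self)
      subst hac
      have htail : ∀ pc ∈ tl, pc.2 = a.2 := fun pc hpc => hL pc (List.mem_cons_of_mem _ hpc)
      have hocc' : Finset.Ico e (e + a.2) ⊆ occ ∪ Finset.Ico j (j + a.2) :=
        fun k hk => Finset.mem_union_left _ (hocc hk)
      have key := ih htail h hocc'
      have hdisjblocks : j + a.2 ≤ e ∨ e + a.2 ≤ j := by
        by_contra hcon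
        push_neg at hcon
        have hk : max j e ∈ Finset.Ico j (j + a.2) := by
          simp only [Finset.mem_Ico]; omega
        have hk2 : max j e ∈ Finset.Ico e (e + a.2) := by
          simp only [Finset.mem_Ico]; omega
        exact hfree _ hk (hocc hk2)
      have hdisj : Disjoint (occ ∩ Finset.range e) (Finset.Ico j (j + a.2) ∩ Finset.range e) := by
        rw [Finset.disjoint_left]
        intro k hk1 hk2
        exact hfree k (Finset.mem_of_mem_inter_left hk2) (Finset.mem_of_mem_inter_left hk1)
      have hunion : (occ ∪ Finset.Ico j (j + a.2)) ∩ Finset.range e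
          = (occ ∩ Finset.range e) ∪ (Finset.Ico j (j + a.2) ∩ Finset.range e) :=
        Finset.union_inter_distrib_right _ _ _
      rw [hunion, Finset.card_union_of_disjoint hdisj] at key
      rcases hdisjblocks with hcase | hcase
      · have : Finset.Ico j (j + a.2) ∩ Finset.range e = Finset.Ico j (j + a.2) := by
          apply Finset.inter_eq_left.mpr
          intro k hk
          simp only [Finset.mem_Ico] at hk
          simp only [Finset.mem_range]; omega
        rw [this, Nat.card_Ico, Nat.add_sub_cancel_left] at key
        calc (occ' ∩ Finset.range e).card ≡ (occ ∩ Finset.range e).card + a.2 [MOD a.2] := key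
          _ ≡ (occ ∩ Finset.range e).card + 0 [MOD a.2] := Nat.ModEq.add_left _ (Nat.modEq_zero_iff_dvd.mpr dvd_rfl)
          _ = (occ ∩ Finset.range e).card := by omega
      · have : Finset.Ico j (j + a.2) ∩ Finset.range e = ∅ := by
          apply Finset.eq_empty_of_forall_notMem
          intro k hk
          simp only [Finset.mem_inter, Finset.mem_Ico, Finset.mem_range] at hk
          omega
        rw [this] at key
        simpa using key

lemma sum_snd_const {l : List ℕ} {c : ℕ} :
    ((l.map (fun a => (a, c))).map Prod.snd).sum = l.length * c := by
  induction l with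
  | nil => simp
  | cons a t ih =>
    simp only [List.map_cons, List.sum_cons, List.length_cons, ih]
    ring

lemma isPA_replicate_iff {n c : ℕ} {x : List ℕ} :
    IsPA (List.replicate n c) x ↔ x.length = n ∧ (∀ a ∈ x, 1 ≤ a ∧ a ≤ n * c) ∧
      ∃ occ', parkList (n * c) (x.map (fun a => (a, c))) ∅ = some occ' := by
  have hsum : (List.replicate n c).sum = n * c := by
    rw [List.sum_replicate, smul_eq_mul]
  constructor
  · rintro ⟨h1, h2, h3⟩
    rw [List.length_replicate] at h1
    rw [hsum] at h2 h3
    rw [zip_replicate_eq_map h1] at h3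
    exact ⟨h1, h2, Option.isSome_iff_exists.mp h3⟩
  · rintro ⟨h1, h2, h3⟩
    refine ⟨by simpa using h1, by rwa [hsum], ?_⟩
    rw [hsum, zip_replicate_eq_map h1]
    exact Option.isSome_iff_exists.mpr h3

lemma mod_necessary {n c : ℕ} (hc : 0 < c) {x : List ℕ}
    (hx : x ∈ PAinv (List.replicate n c)) : ∀ e ∈ x, c ∣ (e - 1) := by
  intro e he
  have hperm : (e :: x.erase e).Perm x := (List.perm_cons_erase he).symm
  have hpa := hx _ hperm
  rw [isPA_replicate_iff] at hpa
  obtain ⟨hlen, hent, occF, hrun⟩ := hpa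
  have hent_e : 1 ≤ e ∧ e ≤ n * c := hent e (List.mem_cons_self)
  simp only [List.map_cons, parkList] at hrun
  cases hp : parkOne (n * c) ∅ e c with
  | none => rw [hp] at hrun; simp at hrun
  | some o =>
    rw [hp, Option.bind_some] at hrun
    obtain ⟨j, hpj, hjm, -, ho, hmin⟩ := parkOne_some_elim hp
    have hje : j = e := le_antisymm (hmin e le_rfl (by omega) (by simp)) hpj
    subst hje
    -- the tail preserves card of (· ∩ range j) mod c
    have hsubblock : Finset.Ico j (j + c) ⊆ o := by
      rw [ho]; exact fun k hk => Finset.mem_union_right _ hk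
    have hmod := parkList_mod hc (L := (x.erase j).map (fun a => (a, c)))
      (by intro pc hpc; simp only [List.mem_map] at hpc; obtain ⟨a, -, rfl⟩ := hpc; rfl)
      hrun hsubblock
    have hoe : o ∩ Finset.range j = ∅ := by
      rw [ho]
      apply Finset.eq_empty_of_forall_notMem
      intro k hk
      simp only [Finset.mem_inter, Finset.mem_union, Finset.notMem_empty, false_or,
        Finset.mem_Ico, Finset.mem_range] at hk
      omega
    rw [hoe] at hmod
    simp only [Finset.card_empty] at hmod
    -- final occupancy is everything
    have hall := parkList_some_elim (m := n * c)
      (L := ((j :: x.erase j).map (fun a => (a, c)))) (occ := ∅)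
      (by simp only [List.map_cons, parkList, hp, Option.bind_some]; exact hrun)
    obtain ⟨-, hcard, hicc⟩ := hall
    have hcard' : occF.card = n * c := by
      rw [hcard, sum_snd_const, Finset.card_empty]
      simp [hlen]
    have hsub : occF ⊆ Finset.Icc 1 (n * c) := by
      have := hicc 1 ?_
      · intro k hk
        have := this hk
        simpa using this
      · intro pc hpc
        simp only [List.mem_map] at hpc
        obtain ⟨a, ha, rfl⟩ := hpc
        exact (hent a ha).1
    have hfull : occF = Finset.Icc 1 (n * c) := by
      apply Finset.eq_of_subset_of_card_le hsub
      rw [hcard']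
      simp
    rw [hfull] at hmod
    have : Finset.Icc 1 (n * c) ∩ Finset.range j = Finset.Ico 1 j := by
      ext k
      simp only [Finset.mem_inter, Finset.mem_Icc, Finset.mem_range, Finset.mem_Ico]
      omega
    rw [this, Nat.card_Ico] at hmod
    exact Nat.modEq_zero_iff_dvd.mp hmod

lemma bound_necessary {n c : ℕ} (hc : 0 < c) {x : List ℕ}
    (hx : x ∈ PAinv (List.replicate n c)) (hs : x.Pairwise (· ≤ ·)) :
    ∀ i (h : i < x.length), x.get ⟨i, h⟩ ≤ c * i + 1 := by
  intro i hi
  by_contra hcon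
  push_neg at hcon
  set e := x.get ⟨i, hi⟩ with hedef
  have he : c * i + 2 ≤ e := hcon
  have hperm : (x.drop i ++ x.take i).Perm x := by
    calc x.drop i ++ x.take i ~ x.take i ++ x.drop i := List.perm_append_comm
      _ = x := List.take_append_drop i x
  have hpa := hx _ hperm
  rw [isPA_replicate_iff] at hpa
  obtain ⟨hlen, hent, occF, hrun⟩ := hpa
  have hlenx : x.length = n := by simpa using hperm.length_eq.symm.trans hlen
  -- all elements of the drop are ≥ e
  have hdropge : ∀ a ∈ x.drop i, e ≤ a := by
    have hsD : (x.drop i).Pairwise (· ≤ ·) := hs.sublist (List.drop_sublist i x)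
    rw [List.drop_eq_getElem_cons hi] at hsD ⊢
    intro a ha
    rcases List.mem_cons.mp ha with rfl | ha
    · exact le_rfl
    · exact (List.pairwise_cons.mp hsD).1 a ha
  -- run the first segment
  rw [List.map_append, parkList_append] at hrun
  cases h1 : parkList (n * c) ((x.drop i).map (fun a => (a, c))) ∅ with
  | none => rw [h1] at hrun; simp at hrun
  | some occ1 =>
    obtain ⟨-, hcard, hicc⟩ := parkList_some_elim h1
    have hsub : occ1 ⊆ Finset.Icc (c * i + 2) (n * c) := by
      have := hicc (c * i + 2) ?_
      · intro k hk; simpa using this hk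
      · intro pc hpc
        simp only [List.mem_map] at hpc
        obtain ⟨a, ha, rfl⟩ := hpc
        exact le_trans he (hdropge a ha)
    have hcard1 : occ1.card = (n - i) * c := by
      rw [hcard, sum_snd_const, Finset.card_empty, List.length_drop, hlenx, Nat.zero_add]
    have hle := Finset.card_le_card hsub
    rw [hcard1, Nat.card_Icc] at hle
    have h2 : (n - i) * c = n * c - c * i := by
      rw [Nat.sub_mul, Nat.mul_comm i c]
    have h3 : c * i + c ≤ n * c := by
      have h4 : (i + 1) * c ≤ n * c := Nat.mul_le_mul_right c (by omega)
      rw [Nat.add_mul, Nat.one_mul, Nat.mul_comm i c] at h4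
      omega
    omega

/-- The aligned occupancy set corresponding to a set of "super-spots". -/
def alOcc (c : ℕ) (S : Finset ℕ) : Finset ℕ :=
  S.biUnion (fun j => Finset.Ico (c * j + 1) (c * j + 1 + c))

lemma mem_alOcc {c : ℕ} {S : Finset ℕ} {k : ℕ} :
    k ∈ alOcc c S ↔ ∃ j ∈ S, c * j + 1 ≤ k ∧ k < c * j + 1 + c := by
  simp [alOcc, Finset.mem_biUnion, Finset.mem_Ico]

lemma parkOne_aligned {n c : ℕ} (hc : 0 < c) {S : Finset ℕ} (hS : S ⊆ Finset.range n)
    {a b0 : ℕ} (hb0 : b0 < n) (hab : a ≤ b0) (hb0S : b0 ∉ S)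
    (hmin : ∀ q, a ≤ q → q < b0 → q ∈ S) :
    parkOne (n * c) (alOcc c S) (c * a + 1) c = some (alOcc c (insert b0 S)) := by
  have hins : alOcc c (insert b0 S)
      = alOcc c S ∪ Finset.Ico (c * b0 + 1) (c * b0 + 1 + c) := by
    rw [alOcc, Finset.biUnion_insert]
    rw [Finset.union_comm]
    rfl
  rw [hins]
  apply parkOne_eq_some
  · have := Nat.mul_le_mul_left c hab
    omega
  · have : c * (b0 + 1) ≤ c * n := Nat.mul_le_mul_left c hb0
    have h2 : c * n = n * c := Nat.mul_comm c n
    rw [Nat.mul_add] at this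
    omega
  · intro k hk hmem
    simp only [Finset.mem_Ico] at hk
    rw [mem_alOcc] at hmem
    obtain ⟨j', hj'S, h1, h2⟩ := hmem
    have hj1 : j' < b0 + 1 := by
      have : c * j' < c * (b0 + 1) := by rw [Nat.mul_add]; omega
      exact Nat.lt_of_mul_lt_mul_left this
    have hj2 : b0 < j' + 1 := by
      have : c * b0 < c * (j' + 1) := by rw [Nat.mul_add]; omega
      exact Nat.lt_of_mul_lt_mul_left this
    have : j' = b0 := by omega
    subst this
    exact hb0S hj'S
  · intro j' hpj' hj'm hfree
    by_contra hcon
    push_neg at hcon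
    -- j' < c * b0 + 1 ; write j' - 1 = c * q + r
    have hq := Nat.div_add_mod (j' - 1) c
    set q := (j' - 1) / c with hqdef
    set r := (j' - 1) % c with hrdef
    have hrlt : r < c := Nat.mod_lt _ hc
    have hj'pos : 1 ≤ j' := by
      have := Nat.mul_le_mul_left c (Nat.zero_le a)
      omega
    have haq : a ≤ q := by
      by_contra hcona
      push_neg at hcona
      have : q + 1 ≤ a := hcona
      have := Nat.mul_le_mul_left c this
      rw [Nat.mul_add] at this
      omega
    have hqb : q < b0 := by
      by_contra hconb
      push_neg at hconb
      have := Nat.mul_le_mul_left c hconb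
      omega
    have hqS : q ∈ S := hmin q haq hqb
    -- find an occupied spot inside [j', j'+c)
    rcases Nat.eq_zero_or_pos r with hr0 | hrpos
    · -- j' = c*q + 1 : the spot j' itself is occupied
      refine hfree j' ?_ ?_
      · simp only [Finset.mem_Ico]; omega
      · rw [mem_alOcc]; exact ⟨q, hqS, by omega, by omega⟩
    · -- the spot c*q + c lies in [j', j'+c) and in block q
      refine hfree (c * q + c) ?_ ?_
      · simp only [Finset.mem_Ico]; omega
      · rw [mem_alOcc]; exact ⟨q, hqS, by omega, by omega⟩

lemma parkList_aligned_success {n c : ℕ} (hc : 0 < c) :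
    ∀ (L : List ℕ) (S : Finset ℕ), S ⊆ Finset.range n →
    (∀ t, t ≤ n → (L.countP (fun a => decide (t ≤ a)))
      ≤ ((Finset.range n \ S).filter (fun q => t ≤ q)).card) →
    ∃ occ', parkList (n * c) (L.map (fun a => (c * a + 1, c))) (alOcc c S) = some occ' := by
  intro L
  induction L with
  | nil => intro S _ _; exact ⟨alOcc c S, rfl⟩
  | cons a L' ih =>
    intro S hS hcrit
    -- the free super-spots at least a
    set F := (Finset.range n \ S).filter (fun q => a ≤ q) with hFdef
    have hFne : F.Nonempty := by
      rw [← Finset.card_pos, hFdef]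
      have h1 := hcrit a ?_
      · have h2 : 1 ≤ (a :: L').countP (fun x => decide (a ≤ x)) := by
          rw [List.countP_cons]
          simp
        omega
      · -- a ≤ n : else criterion at n fails
        by_contra hcona
        push_neg at hcona
        have h3 := hcrit n le_rfl
        have h4 : 1 ≤ (a :: L').countP (fun x => decide (n ≤ x)) := by
          rw [List.countP_cons]
          have : decide (n ≤ a) = true := by simp; omega
          simp [this]
        have h5 : ((Finset.range n \ S).filter (fun q => n ≤ q)).card = 0 := by
          rw [Finset.card_eq_zero]
          apply Finset.eq_empty_of_forall_notMem
          intro q hq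
          simp only [Finset.mem_filter, Finset.mem_sdiff, Finset.mem_range] at hq
          omega
        omega
    set b0 := F.min' hFne with hb0def
    have hb0F : b0 ∈ F := Finset.min'_mem _ _
    have hb0props : b0 ∈ Finset.range n ∧ b0 ∉ S ∧ a ≤ b0 := by
      have := hb0F
      rw [hFdef] at this
      simp only [Finset.mem_filter, Finset.mem_sdiff] at this
      tauto
    have hb0n : b0 < n := Finset.mem_range.mp hb0props.1
    have hmin : ∀ q, a ≤ q → q < b0 → q ∈ S := by
      intro q haq hqb
      by_contra hcon
      have hqF : q ∈ F := by
        rw [hFdef]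
        simp only [Finset.mem_filter, Finset.mem_sdiff, Finset.mem_range]
        exact ⟨⟨by omega, hcon⟩, haq⟩
      have := Finset.min'_le _ _ hqF
      omega
    have hstep := parkOne_aligned hc hS hb0n hb0props.2.2 hb0props.2.1 hmin
    have hS' : insert b0 S ⊆ Finset.range n := by
      intro k hk
      rcases Finset.mem_insert.mp hk with rfl | hk
      · exact hb0props.1
      · exact hS hk
    have hcrit' : ∀ t, t ≤ n → (L'.countP (fun x => decide (t ≤ x)))
        ≤ ((Finset.range n \ insert b0 S).filter (fun q => t ≤ q)).card := by
      intro t htn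
      have hsd : Finset.range n \ insert b0 S = (Finset.range n \ S).erase b0 := by
        ext k
        simp only [Finset.mem_sdiff, Finset.mem_insert, Finset.mem_erase, Finset.mem_range]
        tauto
      rw [hsd, Finset.filter_erase]
      have hold := hcrit t htn
      rw [List.countP_cons] at hold
      by_cases htb0 : t ≤ b0
      · -- b0 is erased from the filter set
        have hb0mem : b0 ∈ (Finset.range n \ S).filter (fun q => t ≤ q) := by
          simp only [Finset.mem_filter, Finset.mem_sdiff, Finset.mem_range]
          exact ⟨⟨by omega, hb0props.2.1⟩, htb0⟩
        rw [Finset.card_erase_of_mem hb0mem]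
        by_cases hta : t ≤ a
        · have : decide (t ≤ a) = true := by simpa using hta
          simp [this] at hold
          omega
        · -- a < t ≤ b0 : the filters at t and at a coincide
          push_neg at hta
          have hsets : (Finset.range n \ S).filter (fun q => t ≤ q)
              = (Finset.range n \ S).filter (fun q => a ≤ q) := by
            ext k
            simp only [Finset.mem_filter, Finset.mem_sdiff, Finset.mem_range]
            constructor
            · rintro ⟨h1, h2⟩; exact ⟨h1, by omega⟩
            · rintro ⟨h1, h2⟩
              refine ⟨h1, ?_⟩
              by_contra hcon
              push_neg at hcon
              have := hmin k h2 (by omega)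
              exact h1.2 this
          have holda := hcrit a (by omega)
          rw [List.countP_cons] at holda
          have hda : decide (a ≤ a) = true := by simp
          simp [hda] at holda
          have hmono : L'.countP (fun x => decide (t ≤ x))
              ≤ L'.countP (fun x => decide (a ≤ x)) := by
            apply List.countP_mono_left
            intro x _ hx
            simp only [decide_eq_true_eq] at hx ⊢
            omega
          rw [hsets]
          omega
      · -- t > b0 : erasing b0 does not change the filter set
        push_neg at htb0
        rw [Finset.erase_eq_of_notMem]
        · have hta : ¬ (t ≤ a) := by omega
          have : decide (t ≤ a) = false := by simpa using hta
          simp [this] at hold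
          omega
        · simp only [Finset.mem_filter]
          rintro ⟨-, h⟩
          omega
    obtain ⟨occ', hocc'⟩ := ih (insert b0 S) hS' hcrit'
    refine ⟨occ', ?_⟩
    simp only [List.map_cons, parkList, hstep, Option.bind_some]
    exact hocc'

lemma alOcc_empty {c : ℕ} : alOcc c ∅ = ∅ := by simp [alOcc]

lemma sufficiency {n c : ℕ} (hc : 0 < c) {b : List ℕ} (hlen : b.length = n)
    (hcrit : ∀ t, t ≤ n → b.countP (fun a => decide (t ≤ a)) ≤ n - t) :
    (b.map (fun a => c * a + 1)) ∈ PAinv (List.replicate n c) := by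
  have hblt : ∀ a ∈ b, a < n := by
    intro a ha
    by_contra hcon
    push_neg at hcon
    have h1 := hcrit n le_rfl
    have h2 : 1 ≤ b.countP (fun x => decide (n ≤ x)) := by
      have : (fun x => decide (n ≤ x)) a = true := by simpa using hcon
      calc 1 = [a].countP (fun x => decide (n ≤ x)) := by simp [this]
        _ ≤ b.countP (fun x => decide (n ≤ x)) :=
          (List.singleton_sublist.mpr ha).countP_le
    omega
  intro x' hperm
  -- x' is the image of a permutation of b
  set g : ℕ → ℕ := fun a => c * a + 1 with hgdef
  set h : ℕ → ℕ := fun e => (e - 1) / c with hhdef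
  have hgh : ∀ a, h (g a) = a := by
    intro a
    simp only [hgdef, hhdef, Nat.add_sub_cancel]
    exact Nat.mul_div_cancel_left a hc
  set b' : List ℕ := x'.map h with hb'def
  have hb'perm : b'.Perm b := by
    have := hperm.map h
    rw [List.map_map] at this
    have heq : b.map (h ∘ g) = b := by
      have h2 : b.map (h ∘ g) = b.map id := List.map_congr_left (fun a _ => hgh a)
      simpa using h2
    rwa [heq] at this
  have hx'eq : x' = b'.map g := by
    rw [hb'def, List.map_map]
    symm
    have hcong : ∀ e ∈ x', (g ∘ h) e = id e := by
      intro e he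
      obtain ⟨a, -, rfl⟩ := List.mem_map.mp (hperm.mem_iff.mp he)
      simp only [Function.comp_apply, hgh, id]
    rw [List.map_congr_left hcong, List.map_id]
  rw [isPA_replicate_iff]
  refine ⟨by rw [hperm.length_eq, List.length_map, hlen], ?_, ?_⟩
  · intro e he
    have : e ∈ b.map g := hperm.mem_iff.mp he
    obtain ⟨a, ha, rfl⟩ := List.mem_map.mp this
    have han := hblt a ha
    constructor
    · simp [hgdef]
    · show c * a + 1 ≤ n * c
      have : c * (a + 1) ≤ c * n := Nat.mul_le_mul_left c han
      rw [Nat.mul_add] at this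
      have : c * n = n * c := Nat.mul_comm c n
      omega
  · rw [hx'eq]
    have hmapmap : (b'.map g).map (fun a => (a, c)) = b'.map (fun a => (c * a + 1, c)) := by
      rw [List.map_map]; rfl
    rw [hmapmap]
    have := parkList_aligned_success (n := n) hc b' ∅ (by simp) ?_
    · rwa [alOcc_empty] at this
    · intro t htn
      rw [hb'perm.countP_eq]
      have := hcrit t htn
      have hfilt : ((Finset.range n \ ∅).filter (fun q => t ≤ q)).card = n - t := by
        rw [Finset.sdiff_empty]
        have : (Finset.range n).filter (fun q => t ≤ q) = Finset.Ico t n := by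
          ext k
          simp only [Finset.mem_filter, Finset.mem_range, Finset.mem_Ico]
          tauto
        rw [this, Nat.card_Ico]
      omega

lemma criterion_of_bounded {n : ℕ} {b : List ℕ} (hlen : b.length = n)
    (hbd : ∀ i (h : i < b.length), b.get ⟨i, h⟩ ≤ i) :
    ∀ t, t ≤ n → b.countP (fun a => decide (t ≤ a)) ≤ n - t := by
  intro t htn
  have hsplit : b.countP (fun a => decide (t ≤ a))
      = (b.take t).countP (fun a => decide (t ≤ a))
        + (b.drop t).countP (fun a => decide (t ≤ a)) := by
    conv_lhs => rw [← List.take_append_drop t b]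
    rw [List.countP_append]
  have h1 : (b.take t).countP (fun a => decide (t ≤ a)) = 0 := by
    rw [List.countP_eq_zero]
    intro e he
    obtain ⟨i, hi, heq⟩ := List.getElem_of_mem he
    have hilen : i < b.length := lt_of_lt_of_le hi (by simp [List.length_take])
    have hit : i < t := lt_of_lt_of_le hi (by simp [List.length_take])
    have : e = b.get ⟨i, hilen⟩ := by
      rw [← heq, List.getElem_take]
      rfl
    have := this ▸ hbd i hilen
    simp only [decide_eq_true_eq]
    omega
  have h2 : (b.drop t).countP (fun a => decide (t ≤ a)) ≤ n - t := by
    calc (b.drop t).countP _ ≤ (b.drop t).length := List.countP_le_length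
      _ = n - t := by rw [List.length_drop, hlen]
  omega

lemma main_charac {n c : ℕ} (hc : 0 < c) :
    {x | x ∈ PAinv (List.replicate n c) ∧ x.Pairwise (· ≤ ·)} =
      (List.map (fun a => c * a + 1)) ''
        {b | b.Pairwise (· ≤ ·) ∧ b.length = n ∧ ∀ i (h : i < b.length), b.get ⟨i, h⟩ ≤ i} := by
  ext x
  simp only [Set.mem_setOf_eq, Set.mem_image]
  constructor
  · rintro ⟨hx, hs⟩
    have hpa := hx x (List.Perm.refl x)
    rw [isPA_replicate_iff] at hpa
    obtain ⟨hlenx, hent, -⟩ := hpa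
    have hmod := mod_necessary hc hx
    have hbd := bound_necessary hc hx hs
    have hge : ∀ e ∈ x, c * ((e - 1) / c) + 1 = e := by
      intro e he
      have h1 : c * ((e - 1) / c) = e - 1 := Nat.mul_div_cancel' (hmod e he)
      have h2 := (hent e he).1
      omega
    refine ⟨x.map (fun e => (e - 1) / c), ⟨?_, ?_, ?_⟩, ?_⟩
    · exact List.Pairwise.map _ (fun a b hab =>
        Nat.div_le_div_right (Nat.sub_le_sub_right hab 1)) hs
    · simp [hlenx]
    · intro i hi
      have hix : i < x.length := by simpa using hi
      simp only [List.get_eq_getElem, List.getElem_map]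
      have hbdi := hbd i hix
      set e := x.get ⟨i, hix⟩ with hedef
      have hee : c * ((e - 1) / c) + 1 = e := hge e (List.get_mem x ⟨i, hix⟩)
      show (e - 1) / c ≤ i
      have : c * ((e - 1) / c) ≤ c * i := by omega
      exact Nat.le_of_mul_le_mul_left this hc
    · rw [List.map_map]
      symm
      have hcong : ∀ e ∈ x, ((fun a => c * a + 1) ∘ fun e => (e - 1) / c) e = id e := by
        intro e he
        simp only [Function.comp_apply, id]
        exact hge e he
      rw [List.map_congr_left hcong, List.map_id]
  · rintro ⟨b, ⟨hbs, hblen, hbbd⟩, rfl⟩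
    constructor
    · exact sufficiency hc hblen (criterion_of_bounded hblen hbbd)
    · exact List.Pairwise.map _
        (fun a b hab => by have := Nat.mul_le_mul_left c hab; omega) hbs

open DyckStep

/-- Build the Dyck-word core from a nondecreasing list of values: before the `(i+1)`-st `U`
there are `bᵢ` `D`s in total. `k` is the number of `D`s already emitted. -/
def mkWord : List ℕ → ℕ → List DyckStep
  | [], _ => []
  | a :: t, k => List.replicate (a - k) D ++ U :: mkWord t a

/-- Read off the list of "number of `D`s before each `U`" from a word. -/
def readWord : List DyckStep → ℕ → List ℕ
  | [], _ => []
  | D :: t, k => readWord t (k + 1)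
  | U :: t, k => k :: readWord t k

lemma readWord_basic : ∀ (w : List DyckStep) (k : ℕ),
    (readWord w k).length = w.count U ∧ (readWord w k).Pairwise (· ≤ ·) ∧
      ∀ e ∈ readWord w k, k ≤ e := by
  intro w
  induction w with
  | nil => intro k; simp [readWord]
  | cons s t ih =>
    intro k
    cases s with
    | D =>
      obtain ⟨h1, h2, h3⟩ := ih (k + 1)
      refine ⟨?_, h2, fun e he => by have := h3 e he; omega⟩
      rw [readWord, h1]
      simp [List.count_cons]
    | U =>
      obtain ⟨h1, h2, h3⟩ := ih k
      refine ⟨?_, ?_, ?_⟩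
      · rw [readWord, List.length_cons, h1]
        simp [List.count_cons]
      · rw [readWord, List.pairwise_cons]
        exact ⟨h3, h2⟩
      · intro e he
        rcases List.mem_cons.mp he with rfl | he
        · exact le_rfl
        · exact h3 e he

lemma readWord_get_le : ∀ (w : List DyckStep) (k i₀ : ℕ),
    (∀ j, (w.take j).count D + k ≤ (w.take j).count U + i₀) →
    ∀ i (h : i < (readWord w k).length), (readWord w k).get ⟨i, h⟩ ≤ i + i₀ := by
  intro w
  induction w with
  | nil => intro k i₀ _ i h; simp [readWord] at h
  | cons s t ih =>
    intro k i₀ hpre i h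
    cases s with
    | D =>
      have hpre' : ∀ j, (t.take j).count D + (k + 1) ≤ (t.take j).count U + i₀ := by
        intro j
        have := hpre (j + 1)
        rw [List.take_succ_cons] at this
        simp [List.count_cons] at this
        omega
      exact ih (k + 1) i₀ hpre' i h
    | U =>
      cases i with
      | zero =>
        have h0 := hpre 0
        simp only [List.take_zero, List.count_nil] at h0
        show k ≤ 0 + i₀
        omega
      | succ i' =>
        have hpre' : ∀ j, (t.take j).count D + k ≤ (t.take j).count U + (i₀ + 1) := by
          intro j
          have := hpre (j + 1)
          rw [List.take_succ_cons] at this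
          simp [List.count_cons] at this
          omega
        have hlen : i' < (readWord t k).length := by
          have : (readWord (U :: t) k).length = (readWord t k).length + 1 := by
            rw [readWord, List.length_cons]
          omega
        have := ih k (i₀ + 1) hpre' i' hlen
        show (readWord (U :: t) k).get ⟨i' + 1, h⟩ ≤ i' + 1 + i₀
        have hrw : readWord (U :: t) k = k :: readWord t k := rfl
        have hh : i' + 1 < (k :: readWord t k).length := by rw [← hrw]; exact h
        have hgoal : (readWord (U :: t) k).get ⟨i' + 1, h⟩
            = (readWord t k).get ⟨i', by simpa using hh⟩ := by
          simp only [List.get_eq_getElem]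
          rw [List.getElem_of_eq hrw, List.getElem_cons_succ]
        rw [hgoal]
        simp only [List.get_eq_getElem] at this ⊢
        omega

lemma readWord_replicate_append : ∀ (d : ℕ) (w : List DyckStep) (k : ℕ),
    readWord (List.replicate d D ++ w) k = readWord w (k + d) := by
  intro d
  induction d with
  | zero => intro w k; simp
  | succ d ih =>
    intro w k
    rw [List.replicate_succ, List.cons_append]
    show readWord (List.replicate d D ++ w) (k + 1) = readWord w (k + (d + 1))
    rw [ih]
    ring_nf

lemma readWord_mkWord : ∀ (b : List ℕ) (k : ℕ) (w' : List DyckStep),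
    (∀ e ∈ b, k ≤ e) → b.Pairwise (· ≤ ·) →
    readWord (mkWord b k ++ w') k = b ++ readWord w' (b.getLastD k) := by
  intro b
  induction b with
  | nil => intro k w' _ _; simp [mkWord, readWord]
  | cons a t ih =>
    intro k w' hk hs
    rw [mkWord, List.append_assoc, List.cons_append, readWord_replicate_append]
    have hka : k ≤ a := hk a (List.mem_cons_self)
    have hkd : k + (a - k) = a := by omega
    rw [hkd]
    show a :: readWord (mkWord t a ++ w') a = (a :: t) ++ readWord w' ((a :: t).getLastD k)
    rw [List.getLastD_cons, List.cons_append]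
    congr 1
    exact ih a w' (List.pairwise_cons.mp hs).1 (List.pairwise_cons.mp hs).2

lemma getLastD_le_of_forall {t : List ℕ} {a M : ℕ} (ha : a ≤ M) (h : ∀ e ∈ t, e ≤ M) :
    t.getLastD a ≤ M := by
  induction t generalizing a with
  | nil => exact ha
  | cons b s ih =>
    rw [List.getLastD_cons]
    exact ih (h b (List.mem_cons_self)) (fun e he => h e (List.mem_cons_of_mem _ he))

lemma le_getLastD {t : List ℕ} (hs : t.Pairwise (· ≤ ·)) {a : ℕ} (h : ∀ e ∈ t, a ≤ e) :
    a ≤ t.getLastD a := by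
  induction t generalizing a with
  | nil => exact le_rfl
  | cons b s ih =>
    rw [List.getLastD_cons]
    have hab : a ≤ b := h b (List.mem_cons_self)
    exact le_trans hab (ih (List.pairwise_cons.mp hs).2 (List.pairwise_cons.mp hs).1)

lemma mkWord_counts : ∀ (b : List ℕ) (k : ℕ), (∀ e ∈ b, k ≤ e) → b.Pairwise (· ≤ ·) →
    (mkWord b k).count U = b.length ∧ (mkWord b k).count D = b.getLastD k - k := by
  intro b
  induction b with
  | nil => intro k _ _; simp [mkWord]
  | cons a t ih =>
    intro k hk hs
    have hka : k ≤ a := hk a (List.mem_cons_self)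
    have hsc := List.pairwise_cons.mp hs
    obtain ⟨ihU, ihD⟩ := ih a hsc.1 hsc.2
    have hag : a ≤ t.getLastD a := le_getLastD hsc.2 hsc.1
    rw [mkWord]
    constructor
    · rw [List.count_append, List.count_cons, ihU]
      simp [List.count_replicate]
    · rw [List.count_append, List.count_replicate_self, List.count_cons, ihD,
        List.getLastD_cons]
      have hUD : (if (U == D) = true then 1 else 0) = 0 := rfl
      rw [hUD]
      omega

lemma take_replicate' {α : Type*} (a : α) : ∀ (j d : ℕ),
    (List.replicate d a).take j = List.replicate (min j d) a := by
  intro j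
  induction j with
  | zero => intro d; simp
  | succ j ih =>
    intro d
    cases d with
    | zero => simp
    | succ d =>
      rw [List.replicate_succ, List.take_succ_cons, ih]
      have : min (j + 1) (d + 1) = min j d + 1 := by omega
      rw [this, List.replicate_succ]

lemma mkWord_prefix : ∀ (b : List ℕ) (k i₀ : ℕ), b.Pairwise (· ≤ ·) →
    (∀ i (h : i < b.length), b.get ⟨i, h⟩ ≤ i + i₀) → (∀ e ∈ b, k ≤ e) → k ≤ i₀ →
    ∀ j, ((mkWord b k).take j).count D + k ≤ ((mkWord b k).take j).count U + i₀ := by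
  intro b
  induction b with
  | nil => intro k i₀ _ _ _ hki j; simp [mkWord]; omega
  | cons a t ih =>
    intro k i₀ hs hbd hk hki j
    have hka : k ≤ a := hk a (List.mem_cons_self)
    have ha0 : a ≤ i₀ := by
      have := hbd 0 (by simp)
      simpa using this
    have hsc := List.pairwise_cons.mp hs
    rw [mkWord, List.take_append, take_replicate', List.count_append,
      List.count_append, List.count_replicate_self, List.count_replicate]
    rw [List.length_replicate]
    cases hj' : j - (a - k) with
    | zero =>
      simp only [List.take_zero, List.count_nil]
      have : min j (a - k) ≤ a - k := Nat.min_le_right _ _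
      have hDUcnt : (if (D == U) = true then min j (a - k) else 0) = 0 := rfl
      rw [hDUcnt]
      omega
    | succ j'' =>
      rw [List.take_succ_cons, List.count_cons, List.count_cons]
      have ihres := ih a (i₀ + 1) hsc.2 ?_ hsc.1 (by omega) j''
      · have hDUcnt : (if (D == U) = true then min j (a - k) else 0) = 0 := rfl
        rw [hDUcnt]
        have hUU : (if (U == U) = true then 1 else 0) = 1 := rfl
        have hUD : (if (U == D) = true then 1 else 0) = 0 := rfl
        rw [hUU, hUD]
        have hmin : min j (a - k) ≤ a - k := Nat.min_le_right _ _
        omega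
      · intro i hi
        have hi' : i + 1 < (a :: t).length := by simpa using Nat.succ_lt_succ hi
        have := hbd (i + 1) hi'
        have hget : (a :: t).get ⟨i + 1, hi'⟩ = t.get ⟨i, hi⟩ := rfl
        rw [hget] at this
        omega

lemma readWord_inj : ∀ (w1 w2 : List DyckStep) (k : ℕ),
    w1.count U = w2.count U → w1.count D = w2.count D →
    readWord w1 k = readWord w2 k → w1 = w2 := by
  intro w1
  induction w1 with
  | nil =>
    intro w2 k hU hD _
    cases w2 with
    | nil => rfl
    | cons s t =>
      cases s with
      | U => rw [List.count_nil, List.count_cons_self] at hU; omega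
      | D => rw [List.count_nil, List.count_cons_self] at hD; omega
  | cons s1 t1 ih =>
    intro w2 k hU hD hr
    cases w2 with
    | nil =>
      cases s1 with
      | U => rw [List.count_nil, List.count_cons_self] at hU; omega
      | D => rw [List.count_nil, List.count_cons_self] at hD; omega
    | cons s2 t2 =>
      cases s1 with
      | U =>
        cases s2 with
        | U =>
          have hr' : k :: readWord t1 k = k :: readWord t2 k := hr
          have hU' : t1.count U = t2.count U := by
            rw [List.count_cons_self, List.count_cons_self] at hU; omega
          have hD' : t1.count D = t2.count D := by
            rw [List.count_cons, List.count_cons] at hD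
            have : (if (U == D) = true then 1 else 0) = 0 := rfl
            rw [this] at hD; omega
          rw [ih t2 k hU' hD' (by injection hr')]
        | D =>
          exfalso
          have hr' : k :: readWord t1 k = readWord t2 (k + 1) := hr
          have hk : k ∈ readWord t2 (k + 1) := by rw [← hr']; exact List.mem_cons_self
          have := (readWord_basic t2 (k + 1)).2.2 k hk
          omega
      | D =>
        cases s2 with
        | D =>
          have hr' : readWord t1 (k + 1) = readWord t2 (k + 1) := hr
          have hU' : t1.count U = t2.count U := by
            rw [List.count_cons, List.count_cons] at hU
            have : (if (D == U) = true then 1 else 0) = 0 := rfl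
            rw [this] at hU; omega
          have hD' : t1.count D = t2.count D := by
            rw [List.count_cons_self, List.count_cons_self] at hD; omega
          rw [ih t2 (k + 1) hU' hD' hr']
        | U =>
          exfalso
          have hr' : readWord t1 (k + 1) = k :: readWord t2 k := hr
          have hk : k ∈ readWord t1 (k + 1) := by rw [hr']; exact List.mem_cons_self
          have := (readWord_basic t1 (k + 1)).2.2 k hk
          omega

/-- The Dyck word associated to a nondecreasing list `b` with `b i ≤ i`. -/
def fullWord (n : ℕ) (b : List ℕ) : List DyckStep :=
  mkWord b 0 ++ List.replicate (n - b.getLastD 0) D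

section fullWordFacts

variable {n : ℕ} {b : List ℕ} (hs : b.Pairwise (· ≤ ·)) (hlen : b.length = n)
  (hbd : ∀ i (h : i < b.length), b.get ⟨i, h⟩ ≤ i)

include hs hlen hbd

lemma b_getLastD_le : b.getLastD 0 ≤ n := by
  apply getLastD_le_of_forall (Nat.zero_le n)
  intro e he
  obtain ⟨i, hi, rfl⟩ := List.getElem_of_mem he
  have := hbd i hi
  simp only [List.get_eq_getElem] at this
  omega

lemma fullWord_count_U : (fullWord n b).count U = n := by
  rw [fullWord, List.count_append, (mkWord_counts b 0 (fun e _ => Nat.zero_le e) hs).1,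
    List.count_replicate, hlen]
  rfl

lemma fullWord_count_D : (fullWord n b).count D = n := by
  rw [fullWord, List.count_append, (mkWord_counts b 0 (fun e _ => Nat.zero_le e) hs).2,
    List.count_replicate_self]
  have := b_getLastD_le hs hlen hbd
  omega

lemma fullWord_prefix :
    ∀ i, ((fullWord n b).take i).count D ≤ ((fullWord n b).take i).count U := by
  intro i
  rw [fullWord, List.take_append, List.count_append, List.count_append]
  have hmk := mkWord_counts b 0 (fun e _ => Nat.zero_le e) hs
  have hpre := mkWord_prefix b 0 0 hs (by simpa using hbd) (fun e _ => Nat.zero_le e) le_rfl i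
  rw [take_replicate', List.count_replicate_self, List.count_replicate]
  have hru : (if (D == U) = true then
      min (i - (mkWord b 0).length) (n - b.getLastD 0) else 0) = 0 := rfl
  rw [hru]
  by_cases hcase : i ≤ (mkWord b 0).length
  · have : i - (mkWord b 0).length = 0 := by omega
    rw [this]
    simpa using hpre
  · push_neg at hcase
    have htake : (mkWord b 0).take i = mkWord b 0 := List.take_of_length_le (by omega)
    rw [htake, hmk.1, hmk.2]
    have h1 : min (i - (mkWord b 0).length) (n - b.getLastD 0) ≤ n - b.getLastD 0 :=
      Nat.min_le_right _ _
    have h2 := b_getLastD_le hs hlen hbd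
    omega

lemma readWord_fullWord : readWord (fullWord n b) 0 = b := by
  rw [fullWord, readWord_mkWord b 0 _ (fun e _ => Nat.zero_le e) hs]
  have : readWord (List.replicate (n - b.getLastD 0) D) (b.getLastD 0) = [] := by
    have := readWord_replicate_append (n - b.getLastD 0) [] (b.getLastD 0)
    rw [List.append_nil] at this
    rw [this]
    rfl
  rw [this, List.append_nil]

end fullWordFacts

/-- The equivalence between bounded nondecreasing lists and Dyck words of semilength `n`. -/
def dyckEquiv (n : ℕ) :
    {b : List ℕ // b.Pairwise (· ≤ ·) ∧ b.length = n ∧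
      ∀ i (h : i < b.length), b.get ⟨i, h⟩ ≤ i} ≃ {p : DyckWord // p.semilength = n} where
  toFun b := ⟨⟨fullWord n b.1,
      by rw [fullWord_count_U b.2.1 b.2.2.1 b.2.2.2, fullWord_count_D b.2.1 b.2.2.1 b.2.2.2],
      fullWord_prefix b.2.1 b.2.2.1 b.2.2.2⟩,
    fullWord_count_U b.2.1 b.2.2.1 b.2.2.2⟩
  invFun p := ⟨readWord p.1.toList 0,
    (readWord_basic p.1.toList 0).2.1,
    by rw [(readWord_basic p.1.toList 0).1]; exact p.2,
    by
      intro i h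
      have := readWord_get_le p.1.toList 0 0 (fun j => by
        have := p.1.count_D_le_count_U j
        omega) i h
      simpa using this⟩
  left_inv b := Subtype.ext (readWord_fullWord b.2.1 b.2.2.1 b.2.2.2)
  right_inv p := by
    apply Subtype.ext
    apply DyckWord.ext
    set b' := readWord p.1.toList 0 with hb'
    have hprops : b'.Pairwise (· ≤ ·) ∧ b'.length = n ∧
        ∀ i (h : i < b'.length), b'.get ⟨i, h⟩ ≤ i := by
      refine ⟨(readWord_basic p.1.toList 0).2.1, ?_, ?_⟩
      · rw [hb', (readWord_basic p.1.toList 0).1]; exact p.2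
      · intro i h
        have := readWord_get_le p.1.toList 0 0 (fun j => by
          have := p.1.count_D_le_count_U j
          omega) i h
        simpa using this
    show fullWord n b' = p.1.toList
    apply readWord_inj _ _ 0
    · rw [fullWord_count_U hprops.1 hprops.2.1 hprops.2.2]
      exact p.2.symm
    · rw [fullWord_count_D hprops.1 hprops.2.1 hprops.2.2]
      rw [← p.1.count_U_eq_count_D]
      exact p.2.symm
    · rw [readWord_fullWord hprops.1 hprops.2.1 hprops.2.2]

lemma countB (n : ℕ) :
    {b : List ℕ | b.Pairwise (· ≤ ·) ∧ b.length = n ∧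
      ∀ i (h : i < b.length), b.get ⟨i, h⟩ ≤ i}.ncard = catalan n := by
  have h1 : Nat.card {b : List ℕ // b.Pairwise (· ≤ ·) ∧ b.length = n ∧
      ∀ i (h : i < b.length), b.get ⟨i, h⟩ ≤ i} = catalan n := by
    rw [Nat.card_congr (dyckEquiv n), Nat.card_eq_fintype_card]
    exact DyckWord.card_dyckWord_semilength_eq_catalan n
  rw [← Nat.card_coe_set_eq]
  exact h1

theorem stmt5 (c n : ℕ) (hc : 0 < c) (hn : 0 < n) :
    {x | x ∈ PAinv (List.replicate n c) ∧ x.Pairwise (· ≤ ·)}.ncard = catalan n := by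
  rw [main_charac hc]
  have hinj : Function.Injective (List.map (fun a => c * a + 1)) := by
    apply List.map_injective_iff.mpr
    intro a b hab
    have h2 : c * a + 1 = c * b + 1 := hab
    have : c * a = c * b := by omega
    exact Nat.eq_of_mul_eq_mul_left hc this
  rw [Set.ncard_image_of_injective _ hinj]
  exact countB n
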